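/- Let G be a finite abelian group and B = Bohr(Γ, ν) a Bohr set in G of rank r = |Γ| ≥ 1. Then for every real t with 0 < t ≤ 1, there exists ρ with t/2 ≤ ρ ≤ t such that the dilate B_ρ = Bohr(Γ, ρν) is regular. -/

import Mathlib

open scoped Classical

/-- The Bohr set `Bohr(Γ, ν) = {x ∈ G : |γ(x) − 1| ≤ ν(γ) for all γ ∈ Γ}`. -/
noncomputable def bohrSet {G : Type*} [AddCommGroup G] [Fintype G]
    (Γ : Finset (AddChar G ℂ)) (ν : AddChar G ℂ → ℝ) : Finset G :=
  Finset.univ.filter fun x => ∀ γ ∈ Γ, ‖γ x - 1‖ ≤ ν γ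

/-- A Bohr set with frequency set `Γ` (of rank `r = |Γ|`) and width `ν` is regular if all
its dilates by `1 + δ`, `|δ| ≤ 1/(100r)`, have almost the same size as it. -/
def IsRegularBohr {G : Type*} [AddCommGroup G] [Fintype G]
    (Γ : Finset (AddChar G ℂ)) (ν : AddChar G ℂ → ℝ) : Prop :=
  ∀ δ : ℝ, |δ| ≤ 1 / (100 * Γ.card) →
    (1 - 100 * Γ.card * |δ|) * ((bohrSet Γ ν).card : ℝ) ≤
        ((bohrSet Γ (fun γ => (1 + δ) * ν γ)).card : ℝ) ∧
      ((bohrSet Γ (fun γ => (1 + δ) * ν γ)).card : ℝ) ≤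
        (1 + 100 * Γ.card * |δ|) * ((bohrSet Γ ν).card : ℝ)

section Helpers

lemma abs_expI_sub_one (θ : ℝ) :
    ‖Complex.exp (θ * Complex.I) - 1‖ = 2 * |Real.sin (θ / 2)| := by
  have hre : (Complex.exp (θ * Complex.I) - 1).re = Real.cos θ - 1 := by
    simp [Complex.exp_ofReal_mul_I_re]
  have him : (Complex.exp (θ * Complex.I) - 1).im = Real.sin θ := by
    simp [Complex.exp_ofReal_mul_I_im]
  rw [Complex.norm_def, Complex.normSq_apply, hre, him]
  have h2 : Real.sin (θ / 2) ^ 2 = 1 / 2 - Real.cos θ / 2 := by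
    rw [Real.sin_sq_eq_half_sub]; norm_num [mul_div_cancel₀]
  have hs : |Real.sin (θ / 2)| ^ 2 = Real.sin (θ / 2) ^ 2 := sq_abs _
  have hpyth := Real.sin_sq_add_cos_sq θ
  have key : (Real.cos θ - 1) * (Real.cos θ - 1) + Real.sin θ * Real.sin θ
      = (2 * |Real.sin (θ / 2)|) ^ 2 := by nlinarith
  rw [key, Real.sqrt_sq (by positivity)]

lemma abs_expI_sub_one_le (θ : ℝ) :
    ‖Complex.exp (θ * Complex.I) - 1‖ ≤ |θ| := by
  rw [abs_expI_sub_one]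
  calc 2 * |Real.sin (θ / 2)| ≤ 2 * |θ / 2| := by
        have := Real.abs_sin_le_abs (x := θ / 2); linarith
    _ = |θ| := by rw [abs_div]; simp; ring

lemma arg_le_of_abs_sub_one_le {z : ℂ} (hz : ‖z‖ = 1) {w : ℝ}
    (h : ‖z - 1‖ ≤ w) : |Complex.arg z| ≤ Real.pi / 2 * w := by
  have hzexp : Complex.exp (↑(Complex.arg z) * Complex.I) = z := by
    have := Complex.norm_mul_exp_arg_mul_I z
    rw [hz] at this; simpa using this
  have hid : ‖z - 1‖ = 2 * |Real.sin (Complex.arg z / 2)| := by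
    conv_lhs => rw [← hzexp]
    rw [abs_expI_sub_one]
  have hpi := Real.pi_pos
  have harg1 : |Complex.arg z / 2| ≤ Real.pi / 2 := by
    have h1 := Complex.arg_le_pi z
    have h2 := Complex.neg_pi_lt_arg z
    rw [abs_le]; constructor <;> linarith
  have hJ := Real.mul_abs_le_abs_sin harg1
  have hstep : 2 / Real.pi * |Complex.arg z / 2| ≤ ‖z - 1‖ / 2 := by
    rw [hid]; linarith
  have habs2 : |Complex.arg z / 2| = |Complex.arg z| / 2 := by
    rw [abs_div]; norm_num
  rw [habs2] at hstep
  have hfinal : |Complex.arg z| ≤ Real.pi / 2 * ‖z - 1‖ := by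
    calc |Complex.arg z| = Real.pi * (2 / Real.pi * (|Complex.arg z| / 2)) := by
          field_simp
      _ ≤ Real.pi * (‖z - 1‖ / 2) := by
          apply mul_le_mul_of_nonneg_left _ hpi.le
          linarith
      _ = Real.pi / 2 * ‖z - 1‖ := by ring
  calc |Complex.arg z| ≤ Real.pi / 2 * ‖z - 1‖ := hfinal
    _ ≤ Real.pi / 2 * w := by apply mul_le_mul_of_nonneg_left h (by positivity)

lemma floor_eq_abs_sub_le {a b w : ℝ} (hw : 0 < w) (h : ⌊a / w⌋ = ⌊b / w⌋) :
    |a - b| ≤ w := by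
  have h1 := Int.floor_le (a / w)
  have h2 := Int.lt_floor_add_one (a / w)
  have h3 := Int.floor_le (b / w)
  have h4 := Int.lt_floor_add_one (b / w)
  rw [h] at h1 h2
  have hd : |a / w - b / w| ≤ 1 := by rw [abs_le]; constructor <;> linarith
  have hq : |a - b| / w ≤ 1 := by
    rw [← abs_of_pos hw, ← abs_div]
    rw [sub_div]; exact hd
  calc |a - b| = |a - b| / w * w := by field_simp
    _ ≤ 1 * w := by apply mul_le_mul_of_nonneg_right hq hw.le
    _ = w := one_mul w

/-- Finite Vitali covering lemma on ℝ. -/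
lemma vitali_finite {ι : Type*} (n : ℕ) : ∀ (s : Finset ι), s.card ≤ n → ∀ (c x : ι → ℝ),
    (∀ i ∈ s, 0 < x i) →
    ∃ w ⊆ s, ((w : Set ι).Pairwise fun i j =>
        Disjoint (Set.Icc (c i - x i) (c i + x i)) (Set.Icc (c j - x j) (c j + x j))) ∧
      ∀ i ∈ s, ∃ j ∈ w, Set.Icc (c i - x i) (c i + x i) ⊆
        Set.Icc (c j - 3 * x j) (c j + 3 * x j) := by
  induction n with
  | zero =>
    intro s hs c x _
    rw [Nat.le_zero, Finset.card_eq_zero] at hs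
    subst hs
    exact ⟨∅, Finset.Subset.refl _, by simp, by simp⟩
  | succ n ih =>
    intro s hs c x hx
    rcases Finset.eq_empty_or_nonempty s with rfl | hsne
    · exact ⟨∅, Finset.Subset.refl _, by simp, by simp⟩
    obtain ⟨j₀, hj₀s, hj₀max⟩ := Finset.exists_max_image s x hsne
    set s' := s.filter (fun i => Disjoint (Set.Icc (c i - x i) (c i + x i))
      (Set.Icc (c j₀ - x j₀) (c j₀ + x j₀))) with hs'
    have hj₀ns' : j₀ ∉ s' := by
      simp only [hs', Finset.mem_filter, not_and]
      intro _
      rw [Set.not_disjoint_iff]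
      refine ⟨c j₀, Set.mem_Icc.mpr ⟨?_, ?_⟩, Set.mem_Icc.mpr ⟨?_, ?_⟩⟩ <;>
        linarith [hx j₀ hj₀s]
    have hcard : s'.card ≤ n := by
      have hss : s' ⊂ s := ⟨Finset.filter_subset _ _, fun h => hj₀ns' (h hj₀s)⟩
      have := Finset.card_lt_card hss
      omega
    obtain ⟨w', hw's', hw'disj, hw'cov⟩ := ih s' hcard c x
      (fun i hi => hx i (Finset.filter_subset _ _ hi))
    refine ⟨insert j₀ w', ?_, ?_, ?_⟩
    · intro i hi
      rcases Finset.mem_insert.mp hi with rfl | hi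
      · exact hj₀s
      · exact Finset.filter_subset _ _ (hw's' hi)
    · rw [Finset.coe_insert]
      apply Set.Pairwise.insert hw'disj
      intro j hj hne
      have hjs' : j ∈ s' := hw's' hj
      rw [hs', Finset.mem_filter] at hjs'
      exact ⟨hjs'.2.symm, hjs'.2⟩
    · intro i hi
      by_cases hdisj : Disjoint (Set.Icc (c i - x i) (c i + x i))
          (Set.Icc (c j₀ - x j₀) (c j₀ + x j₀))
      · have his' : i ∈ s' := by rw [hs', Finset.mem_filter]; exact ⟨hi, hdisj⟩
        obtain ⟨j, hj, hsub⟩ := hw'cov i his'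
        exact ⟨j, Finset.mem_insert_of_mem hj, hsub⟩
      · refine ⟨j₀, Finset.mem_insert_self _ _, ?_⟩
        rw [Set.not_disjoint_iff] at hdisj
        obtain ⟨z, hz1, hz2⟩ := hdisj
        rw [Set.mem_Icc] at hz1 hz2
        have hxi : x i ≤ x j₀ := hj₀max i hi
        intro y hy
        rw [Set.mem_Icc] at hy ⊢
        constructor <;> linarith [hz1.1, hz1.2, hz2.1, hz2.2, hy.1, hy.2]

/-- Telescoping: sum of increments of a monotone function over disjoint intervals. -/
lemma sum_increments {ι : Type*} (f : ℝ → ℝ) (hf : Monotone f) (n : ℕ) :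
    ∀ (w : Finset ι), w.card ≤ n → ∀ (a b : ι → ℝ) (A B : ℝ), A ≤ B →
    (∀ j ∈ w, A ≤ a j ∧ a j ≤ b j ∧ b j ≤ B) →
    ((w : Set ι).Pairwise fun i j => Disjoint (Set.Icc (a i) (b i)) (Set.Icc (a j) (b j))) →
    ∑ j ∈ w, (f (b j) - f (a j)) ≤ f B - f A := by
  induction n with
  | zero =>
    intro w hw a b A B hAB _ _
    rw [Nat.le_zero, Finset.card_eq_zero] at hw
    subst hw
    simp [sub_nonneg.mpr (hf hAB)]
  | succ n ih =>
    intro w hw a b A B hAB hbound hdisj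
    rcases Finset.eq_empty_or_nonempty w with rfl | hwne
    · simp [sub_nonneg.mpr (hf hAB)]
    obtain ⟨j₀, hj₀w, hj₀max⟩ := Finset.exists_max_image w a hwne
    have hkey : ∀ j ∈ w.erase j₀, b j ≤ a j₀ := by
      intro j hj
      have hjw := Finset.mem_of_mem_erase hj
      have hne := Finset.ne_of_mem_erase hj
      by_contra hcon
      push_neg at hcon
      have hthis := hdisj (Finset.mem_coe.mpr hjw) (Finset.mem_coe.mpr hj₀w) hne
      simp only [Set.disjoint_left] at hthis
      exact hthis (Set.mem_Icc.mpr ⟨hj₀max j hjw, hcon.le⟩)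
        (Set.mem_Icc.mpr ⟨le_refl _, (hbound j₀ hj₀w).2.1⟩)
    have hcard : (w.erase j₀).card ≤ n := by
      have := Finset.card_erase_of_mem hj₀w
      omega
    have hAa : A ≤ a j₀ := (hbound j₀ hj₀w).1
    have ihsum := ih (w.erase j₀) hcard a b A (a j₀) hAa
      (fun j hj => ⟨(hbound j (Finset.mem_of_mem_erase hj)).1,
        (hbound j (Finset.mem_of_mem_erase hj)).2.1, hkey j hj⟩)
      (hdisj.mono (by simp [Finset.coe_subset]))
    have hsplit : ∑ j ∈ w, (f (b j) - f (a j))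
        = (f (b j₀) - f (a j₀)) + ∑ j ∈ w.erase j₀, (f (b j) - f (a j)) :=
      (Finset.add_sum_erase _ _ hj₀w).symm
    rw [hsplit]
    have hfb : f (b j₀) ≤ f B := hf (hbound j₀ hj₀w).2.2
    linarith

variable {G : Type*} [AddCommGroup G] [Fintype G]

lemma mem_bohrSet {Γ : Finset (AddChar G ℂ)} {ν : AddChar G ℂ → ℝ} {x : G} :
    x ∈ bohrSet Γ ν ↔ ∀ γ ∈ Γ, ‖γ x - 1‖ ≤ ν γ := by
  simp [bohrSet]

lemma bohrSet_mono {Γ : Finset (AddChar G ℂ)} {ν₁ ν₂ : AddChar G ℂ → ℝ}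
    (h : ∀ γ ∈ Γ, ν₁ γ ≤ ν₂ γ) : bohrSet Γ ν₁ ⊆ bohrSet Γ ν₂ := by
  intro x hx
  rw [mem_bohrSet] at hx ⊢
  exact fun γ hγ => (hx γ hγ).trans (h γ hγ)

lemma zero_mem_bohrSet {Γ : Finset (AddChar G ℂ)} {ν : AddChar G ℂ → ℝ}
    (h : ∀ γ ∈ Γ, 0 ≤ ν γ) : (0 : G) ∈ bohrSet Γ ν := by
  rw [mem_bohrSet]
  intro γ hγ
  simpa using h γ hγ

lemma abs_char (γ : AddChar G ℂ) (x : G) : ‖γ x‖ = 1 := by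
  exact AddChar.norm_apply γ x

/-- Key doubling estimate for Bohr sets. -/
lemma bohr_doubling (Γ : Finset (AddChar G ℂ)) (ν : AddChar G ℂ → ℝ)
    (hν : ∀ γ ∈ Γ, 0 ≤ ν γ) (ρ ρ' : ℝ) (hρ : 0 < ρ)
    (hrat : Real.pi * ρ' < 8 * ρ) :
    (bohrSet Γ fun γ => ρ' * ν γ).card ≤ 8 ^ Γ.card * (bohrSet Γ fun γ => ρ * ν γ).card := by
  classical
  set T := bohrSet Γ fun γ => ρ' * ν γ with hT
  set B := bohrSet Γ fun γ => ρ * ν γ with hB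
  set cmap : G → (↥Γ → ℤ) := fun x γ => ⌊Complex.arg (γ.1 x) / (ρ * ν γ.1)⌋ with hcmap
  have hmaps : ∀ x ∈ T, cmap x ∈ Fintype.piFinset fun _ : ↥Γ => Finset.Icc (-4 : ℤ) 3 := by
    intro x hx
    rw [Fintype.mem_piFinset]
    intro γ
    have hxγ : ‖γ.1 x - 1‖ ≤ ρ' * ν γ.1 := (mem_bohrSet.mp hx) γ.1 γ.2
    rw [Finset.mem_Icc]
    simp only [hcmap]
    by_cases hw : 0 < ν γ.1
    · have harg := arg_le_of_abs_sub_one_le (abs_char γ.1 x) hxγ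
      have hπ := Real.pi_pos
      have hq : |Complex.arg (γ.1 x) / (ρ * ν γ.1)| < 4 := by
        rw [abs_div, abs_of_pos (mul_pos hρ hw)]
        rw [div_lt_iff₀ (mul_pos hρ hw)]
        calc |Complex.arg (γ.1 x)| ≤ Real.pi / 2 * (ρ' * ν γ.1) := harg
          _ < 4 * (ρ * ν γ.1) := by nlinarith
      have hq1 : (-4 : ℝ) ≤ Complex.arg (γ.1 x) / (ρ * ν γ.1) := by
        have := abs_le.mp hq.le; linarith [this.1]
      have hq2 : Complex.arg (γ.1 x) / (ρ * ν γ.1) < 4 := (abs_lt.mp hq).2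
      constructor
      · exact_mod_cast Int.le_floor.mpr (by exact_mod_cast hq1)
      · have hfl : ⌊Complex.arg (γ.1 x) / (ρ * ν γ.1)⌋ < 4 := by
          rw [Int.floor_lt]; exact_mod_cast hq2
        omega
    · have hw0 : ν γ.1 = 0 := le_antisymm (not_lt.mp hw) (hν γ.1 γ.2)
      have hle : ‖γ.1 x - 1‖ ≤ 0 := by rw [hw0] at hxγ; simpa using hxγ
      have hx1 : γ.1 x = 1 := by
        have := le_antisymm hle (norm_nonneg _)
        rwa [norm_eq_zero, sub_eq_zero] at this
      simp [hx1, Complex.arg_one]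
  have hfiber : ∀ v : ↥Γ → ℤ, (T.filter fun x => cmap x = v).card ≤ B.card := by
    intro v
    rcases Finset.eq_empty_or_nonempty (T.filter fun x => cmap x = v) with he | ⟨y, hy⟩
    · simp [he]
    · apply Finset.card_le_card_of_injOn (fun x => x - y)
      · intro x hx
        rw [Finset.mem_coe, Finset.mem_filter] at hx
        rw [Finset.mem_filter] at hy
        obtain ⟨hxT, hxv⟩ := hx
        obtain ⟨hyT, hyv⟩ := hy
        rw [Finset.mem_coe, mem_bohrSet]
        intro γ hγ
        have hxγ : ‖γ x - 1‖ ≤ ρ' * ν γ := (mem_bohrSet.mp hxT) γ hγ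
        have hyγ : ‖γ y - 1‖ ≤ ρ' * ν γ := (mem_bohrSet.mp hyT) γ hγ
        have hsub : γ (x - y) = γ x * (γ y)⁻¹ := by
          rw [sub_eq_add_neg, AddChar.map_add_eq_mul, AddChar.map_neg_eq_inv]
        by_cases hw : 0 < ν γ
        · have hfl : ⌊Complex.arg (γ x) / (ρ * ν γ)⌋ = ⌊Complex.arg (γ y) / (ρ * ν γ)⌋ := by
            have h1 : cmap x ⟨γ, hγ⟩ = v ⟨γ, hγ⟩ := by rw [hxv]
            have h2 : cmap y ⟨γ, hγ⟩ = v ⟨γ, hγ⟩ := by rw [hyv]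
            rw [hcmap] at h1 h2
            simpa using h1.trans h2.symm
          have hdiff : |Complex.arg (γ x) - Complex.arg (γ y)| ≤ ρ * ν γ :=
            floor_eq_abs_sub_le (by positivity) hfl
          have hex : Complex.exp (↑(Complex.arg (γ x)) * Complex.I) = γ x := by
            have := Complex.norm_mul_exp_arg_mul_I (γ x)
            rw [abs_char] at this; simpa using this
          have hey : Complex.exp (↑(Complex.arg (γ y)) * Complex.I) = γ y := by
            have := Complex.norm_mul_exp_arg_mul_I (γ y)
            rw [abs_char] at this; simpa using this
          set θx := Complex.arg (γ x) with hθx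
          set θy := Complex.arg (γ y) with hθy
          have hexp : γ (x - y) = Complex.exp (↑(θx - θy) * Complex.I) := by
            rw [hsub, ← hex, ← hey, ← Complex.exp_neg, ← Complex.exp_add]
            congr 1
            push_cast
            ring
          rw [hexp]
          calc ‖Complex.exp (↑(θx - θy) * Complex.I) - 1‖
              ≤ |θx - θy| := abs_expI_sub_one_le _
            _ ≤ ρ * ν γ := hdiff
        · have hw0 : ν γ = 0 := le_antisymm (not_lt.mp hw) (hν γ hγ)
          have hx1 : γ x = 1 := by
            rw [hw0, mul_zero] at hxγ
            have := le_antisymm hxγ (norm_nonneg _)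
            rwa [norm_eq_zero, sub_eq_zero] at this
          have hy1 : γ y = 1 := by
            rw [hw0, mul_zero] at hyγ
            have := le_antisymm hyγ (norm_nonneg _)
            rwa [norm_eq_zero, sub_eq_zero] at this
          rw [hsub, hx1, hy1, hw0]
          simp
      · intro a _ b _ hab
        simpa using hab
  calc T.card = ∑ v ∈ T.image cmap, (T.filter fun x => cmap x = v).card :=
        Finset.card_eq_sum_card_fiberwise fun x hx => Finset.mem_image_of_mem _ hx
    _ ≤ ∑ _v ∈ T.image cmap, B.card := Finset.sum_le_sum fun v _ => hfiber v
    _ = (T.image cmap).card * B.card := by rw [Finset.sum_const, smul_eq_mul]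
    _ ≤ 8 ^ Γ.card * B.card := by
        apply Nat.mul_le_mul_right
        calc (T.image cmap).card ≤ (Fintype.piFinset fun _ : ↥Γ => Finset.Icc (-4 : ℤ) 3).card := by
              apply Finset.card_le_card
              intro v hv
              obtain ⟨x, hx, rfl⟩ := Finset.mem_image.mp hv
              exact hmaps x hx
          _ = 8 ^ Γ.card := by
              rw [Fintype.card_piFinset]
              simp [Int.card_Icc]

end Helpers

set_option maxHeartbeats 4000000 in
/-- Bourgain's lemma: every Bohr set has, for each `0 < t ≤ 1`, a regular dilate `B_ρ` with
`t/2 ≤ ρ ≤ t`. -/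
theorem exists_regular_dilate {G : Type*} [AddCommGroup G] [Fintype G]
    (Γ : Finset (AddChar G ℂ)) (hΓ : Γ.Nonempty) (ν : AddChar G ℂ → ℝ)
    (hν : ∀ γ ∈ Γ, 0 ≤ ν γ ∧ ν γ ≤ 2) (t : ℝ) (ht0 : 0 < t) (ht1 : t ≤ 1) :
    ∃ ρ : ℝ, t / 2 ≤ ρ ∧ ρ ≤ t ∧ IsRegularBohr Γ (fun γ => ρ * ν γ) := by
  classical
  by_contra hcon
  push_neg at hcon
  have hν0 : ∀ γ ∈ Γ, 0 ≤ ν γ := fun γ h => (hν γ h).1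
  set r := Γ.card with hrdef
  have hr1 : 1 ≤ r := Finset.card_pos.mpr hΓ
  have hr1' : (1 : ℝ) ≤ (r : ℝ) := by exact_mod_cast hr1
  set η : ℝ := 1 / (100 * r) with hηdef
  have hη0 : 0 < η := by rw [hηdef]; positivity
  have hη100 : η ≤ 1 / 100 := by
    rw [hηdef, div_le_div_iff₀ (by positivity) (by norm_num)]
    nlinarith
  set F : ℝ → ℕ := fun ρ => (bohrSet Γ fun γ => ρ * ν γ).card with hFdef
  have hFmono : ∀ ⦃a b : ℝ⦄, a ≤ b → F a ≤ F b := by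
    intro a b hab
    apply Finset.card_le_card
    apply bohrSet_mono
    intro γ hγ
    exact mul_le_mul_of_nonneg_right hab (hν0 γ hγ)
  have hFpos : ∀ a : ℝ, 0 ≤ a → 0 < F a := fun a ha =>
    Finset.card_pos.mpr ⟨0, zero_mem_bohrSet fun γ hγ => mul_nonneg ha (hν0 γ hγ)⟩
  set f : ℝ → ℝ := fun u => Real.log (F (t * Real.exp u)) with hfdef
  have hfmono : Monotone f := by
    intro u v huv
    apply Real.log_le_log (by exact_mod_cast hFpos _ (by positivity))
    exact_mod_cast hFmono (mul_le_mul_of_nonneg_left (Real.exp_le_exp.mpr huv) ht0.le)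
  set L : ℝ := Real.log 2 with hLdef
  have hL0 : 0 < L := Real.log_pos one_lt_two
  have hL1 : L ≤ 1 := by
    rw [hLdef]
    calc Real.log 2 ≤ 2 - 1 := Real.log_le_sub_one_of_pos two_pos
      _ = 1 := by norm_num
  -- every point of [-L, 0] is "bad"
  have hbad : ∀ u ∈ Set.Icc (-L) (0 : ℝ), ∃ x : ℝ, 0 < x ∧ x ≤ 2 * η ∧
      50 * (r : ℝ) * x < f (u + x) - f (u - x) := by
    intro u hu
    rw [Set.mem_Icc] at hu
    set ρ : ℝ := t * Real.exp u with hρdef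
    have hρ0 : 0 < ρ := by positivity
    have hρlow : t / 2 ≤ ρ := by
      rw [hρdef]
      have : Real.exp (-L) ≤ Real.exp u := Real.exp_le_exp.mpr hu.1
      rw [hLdef] at this
      rw [Real.exp_neg, Real.exp_log two_pos] at this
      calc t / 2 = t * 2⁻¹ := by ring
        _ ≤ t * Real.exp u := mul_le_mul_of_nonneg_left this ht0.le
    have hρhigh : ρ ≤ t := by
      rw [hρdef]
      have : Real.exp u ≤ Real.exp 0 := Real.exp_le_exp.mpr hu.2
      rw [Real.exp_zero] at this
      calc t * Real.exp u ≤ t * 1 := mul_le_mul_of_nonneg_left this ht0.le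
        _ = t := mul_one t
    have hreg := hcon ρ hρlow hρhigh
    rw [IsRegularBohr] at hreg
    push_neg at hreg
    obtain ⟨δ, hδle, hfail⟩ := hreg
    have hδη : |δ| ≤ η := hδle
    -- rewrite the dilated Bohr set
    have hfun : (fun γ => (1 + δ) * (ρ * ν γ)) = fun γ => ((1 + δ) * ρ) * ν γ := by
      funext γ; ring
    rw [hfun] at hfail
    rcases Decidable.imp_iff_not_or.mp hfail with h | h
    · -- lower bound fails : F((1+δ)ρ) < (1 - 100 r |δ|) F ρ
      push_neg at h
      have hFle : ((F ((1 + δ) * ρ)) : ℝ) < (1 - 100 * (r : ℝ) * |δ|) * (F ρ : ℝ) := h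
      have hδneg : δ < 0 := by
        by_contra hge
        push_neg at hge
        have h1 : ρ ≤ (1 + δ) * ρ := by nlinarith
        have h2 : (F ρ : ℝ) ≤ (F ((1 + δ) * ρ) : ℝ) := by exact_mod_cast hFmono h1
        have h3 : (0 : ℝ) ≤ 100 * (r : ℝ) * |δ| := by positivity
        have h4 : (0 : ℝ) < (F ρ : ℝ) := by exact_mod_cast hFpos ρ hρ0.le
        nlinarith
      set d : ℝ := -δ with hddef
      have hd0 : 0 < d := by rw [hddef]; linarith
      have hdη : d ≤ η := by
        have : |δ| = d := by rw [hddef, abs_of_neg hδneg]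
        linarith [this ▸ hδη]
      have hd100 : d ≤ 1 / 100 := hdη.trans hη100
      have h1d : 0 < 1 - d := by linarith
      set x : ℝ := -Real.log (1 - d) with hxdef
      have hx0 : 0 < x := by
        rw [hxdef, neg_pos]
        exact Real.log_neg h1d (by linarith)
      have hx2d : x ≤ 2 * d := by
        rw [hxdef, neg_le]
        rw [← Real.log_exp (-(2 * d))]
        apply Real.log_le_log (Real.exp_pos _)
        have he1 : 1 + 2 * d ≤ Real.exp (2 * d) := by
          have := Real.add_one_le_exp (2 * d); linarith
        have he2 : Real.exp (-(2 * d)) * Real.exp (2 * d) = 1 := by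
          rw [← Real.exp_add]; simp
        nlinarith [Real.exp_pos (2 * d), Real.exp_pos (-(2 * d))]
      have hx2η : x ≤ 2 * η := by linarith
      refine ⟨x, hx0, hx2η, ?_⟩
      -- f(u - x) = log F((1-d)ρ)
      have hux : t * Real.exp (u - x) = (1 + δ) * ρ := by
        have hxe : Real.exp (-x) = 1 - d := by
          rw [hxdef, neg_neg, Real.exp_log h1d]
        have h1δ : (1 : ℝ) + δ = 1 - d := by rw [hddef]; ring
        rw [show u - x = u + -x by ring, Real.exp_add, hxe, h1δ, hρdef]
        ring
      have hfu : f (u - x) = Real.log (F ((1 + δ) * ρ)) := by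
        simp only [hfdef]; rw [hux]
      have hfuu : f u = Real.log (F ρ) := by
        simp only [hfdef, hρdef]
      have hFd : (0 : ℝ) < (F ((1 + δ) * ρ) : ℝ) := by
        have h1δ : (0:ℝ) ≤ 1 + δ := by linarith
        have : (0:ℝ) ≤ (1 + δ) * ρ := mul_nonneg h1δ hρ0.le
        exact_mod_cast hFpos _ this
      have hfactor : (0 : ℝ) < 1 - 100 * (r : ℝ) * |δ| := by
        by_contra hle
        push_neg at hle
        have hFρ : (0:ℝ) ≤ (F ρ : ℝ) := Nat.cast_nonneg _
        have hmul := mul_le_mul_of_nonneg_right hle hFρ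
        rw [zero_mul] at hmul
        have hF2 : (0:ℝ) ≤ (F ((1 + δ) * ρ) : ℝ) := Nat.cast_nonneg _
        linarith
      have habsδ : |δ| = d := by rw [hddef, abs_of_neg hδneg]
      -- log inequality
      have hlog1 : Real.log (F ((1 + δ) * ρ))
          < Real.log (1 - 100 * (r : ℝ) * |δ|) + Real.log (F ρ) := by
        rw [← Real.log_mul (by linarith) (by
          have : (0:ℝ) < (F ρ : ℝ) := by exact_mod_cast hFpos ρ hρ0.le
          exact this.ne')]
        exact Real.log_lt_log hFd hFle
      have hlog2 : Real.log (1 - 100 * (r : ℝ) * |δ|) ≤ -(100 * (r : ℝ) * d) := by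
        rw [habsδ]
        have := Real.log_le_sub_one_of_pos (by rw [habsδ] at hfactor; exact hfactor)
        linarith
      have hfux : f u - f (u - x) > 100 * (r : ℝ) * d := by
        rw [hfu, hfuu]
        linarith
      have hmono2 : f u ≤ f (u + x) := hfmono (by linarith)
      have h50 : 50 * (r : ℝ) * x ≤ 100 * (r : ℝ) * d := by
        have := mul_le_mul_of_nonneg_left hx2d (show (0:ℝ) ≤ 50 * (r:ℝ) by linarith)
        linarith
      linarith
    · -- upper bound fails : F((1+δ)ρ) > (1 + 100 r |δ|) F ρ
      have hFgt : (1 + 100 * (r : ℝ) * |δ|) * (F ρ : ℝ) < (F ((1 + δ) * ρ) : ℝ) := h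
      have hδpos : 0 < δ := by
        by_contra hge
        push_neg at hge
        have h1 : (1 + δ) * ρ ≤ ρ := by nlinarith
        have h2 : (F ((1 + δ) * ρ) : ℝ) ≤ (F ρ : ℝ) := by exact_mod_cast hFmono h1
        have h3 : (0 : ℝ) ≤ 100 * (r : ℝ) * |δ| := by positivity
        have h4 : (0 : ℝ) < (F ρ : ℝ) := by exact_mod_cast hFpos ρ hρ0.le
        nlinarith
      have habsδ : |δ| = δ := abs_of_pos hδpos
      have hδη' : δ ≤ η := by rw [habsδ] at hδη; exact hδη
      set x : ℝ := Real.log (1 + δ) with hxdef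
      have hx0 : 0 < x := Real.log_pos (by linarith)
      have hxd : x ≤ δ := by
        have := Real.log_le_sub_one_of_pos (show (0:ℝ) < 1 + δ by linarith)
        rw [hxdef]; linarith
      have hx2η : x ≤ 2 * η := by linarith
      refine ⟨x, hx0, hx2η, ?_⟩
      have hux : t * Real.exp (u + x) = (1 + δ) * ρ := by
        rw [Real.exp_add, hxdef, Real.exp_log (by linarith : (0:ℝ) < 1 + δ), hρdef]
        ring
      have hfu : f (u + x) = Real.log (F ((1 + δ) * ρ)) := by
        simp only [hfdef]; rw [hux]
      have hfuu : f u = Real.log (F ρ) := by simp only [hfdef, hρdef]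
      have hFρpos : (0 : ℝ) < (F ρ : ℝ) := by exact_mod_cast hFpos ρ hρ0.le
      have hspos : (0 : ℝ) < 1 + 100 * (r : ℝ) * |δ| := by positivity
      have hlog1 : Real.log (1 + 100 * (r : ℝ) * |δ|) + Real.log (F ρ)
          < Real.log (F ((1 + δ) * ρ)) := by
        rw [← Real.log_mul hspos.ne' hFρpos.ne']
        exact Real.log_lt_log (by positivity) hFgt
      -- log(1+s) ≥ s/2 for 0 ≤ s ≤ 1
      set s : ℝ := 100 * (r : ℝ) * δ with hsdef
      have hs0 : 0 < s := by rw [hsdef]; positivity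
      have hs1 : s ≤ 1 := by
        have hδ' : δ ≤ 1 / (100 * (r : ℝ)) := by rw [hηdef] at hδη'; exact hδη'
        rw [le_div_iff₀ (by positivity)] at hδ'
        rw [hsdef]; nlinarith
      have hhalf : s / 2 ≤ Real.log (1 + s) := by
        have h1 : 1 - s / 2 ≤ Real.exp (-(s / 2)) := by
          have := Real.add_one_le_exp (-(s / 2)); linarith
        have h2 : Real.exp (s / 2) * Real.exp (-(s / 2)) = 1 := by
          rw [← Real.exp_add]; simp
        have h3 : Real.exp (s / 2) ≤ 1 + s := by
          nlinarith [Real.exp_pos (s / 2), Real.exp_pos (-(s / 2))]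
        calc s / 2 = Real.log (Real.exp (s / 2)) := (Real.log_exp _).symm
          _ ≤ Real.log (1 + s) := Real.log_le_log (Real.exp_pos _) h3
      have hs100 : 1 + 100 * (r : ℝ) * |δ| = 1 + s := by rw [habsδ, hsdef]
      rw [hs100] at hlog1
      have hfux : f (u + x) - f u > s / 2 := by
        rw [hfu, hfuu]; linarith
      have hmono2 : f (u - x) ≤ f u := hfmono (by linarith)
      have h50 : 50 * (r : ℝ) * x ≤ s / 2 := by rw [hsdef]; nlinarith
      linarith
  -- choose radii for each bad point
  choose! xf hxf1 hxf2 hxf3 using hbad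
  -- finite subcover by compactness
  have hcover : Set.Icc (-L) (0 : ℝ) ⊆
      ⋃ i : ↥(Set.Icc (-L) (0 : ℝ)), Metric.ball (i : ℝ) (xf i) := by
    intro u hu
    rw [Set.mem_iUnion]
    exact ⟨⟨u, hu⟩, Metric.mem_ball_self (hxf1 u hu)⟩
  obtain ⟨s, hs⟩ := isCompact_Icc.elim_finite_subcover
    (fun i : ↥(Set.Icc (-L) (0 : ℝ)) => Metric.ball (i : ℝ) (xf i))
    (fun i => Metric.isOpen_ball) hcover
  -- Vitali subfamily
  obtain ⟨w, hws, hwdisj, hwcov⟩ := vitali_finite s.card s le_rfl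
    (fun i => (i : ℝ)) (fun i => xf ↑i) (fun i _ => hxf1 ↑i i.2)
  -- length estimate
  have hlen : L ≤ ∑ j ∈ w, 6 * xf ↑j := by
    have h1 : Set.Icc (-L) (0 : ℝ) ⊆
        ⋃ j ∈ w, Set.Icc ((j : ℝ) - 3 * xf ↑j) ((j : ℝ) + 3 * xf ↑j) := by
      intro u hu
      have he := hs hu
      rw [Set.mem_iUnion₂] at he
      obtain ⟨i, hi, hiball⟩ := he
      obtain ⟨j, hjw, hsub⟩ := hwcov i hi
      rw [Set.mem_iUnion₂]
      refine ⟨j, hjw, hsub ?_⟩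
      rw [Metric.mem_ball, Real.dist_eq, abs_lt] at hiball
      exact Set.mem_Icc.mpr ⟨by linarith [hiball.1], by linarith [hiball.2]⟩
    have h2 : MeasureTheory.volume (Set.Icc (-L) (0 : ℝ))
        ≤ ∑ j ∈ w, MeasureTheory.volume
            (Set.Icc ((j : ℝ) - 3 * xf ↑j) ((j : ℝ) + 3 * xf ↑j)) :=
      le_trans (MeasureTheory.measure_mono h1) (MeasureTheory.measure_biUnion_finset_le _ _)
    rw [Real.volume_Icc] at h2
    have h3 : ∀ j ∈ w, MeasureTheory.volume
        (Set.Icc ((j : ℝ) - 3 * xf ↑j) ((j : ℝ) + 3 * xf ↑j))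
        = ENNReal.ofReal (6 * xf ↑j) := by
      intro j _
      rw [Real.volume_Icc]
      congr 1
      ring
    rw [Finset.sum_congr rfl h3] at h2
    rw [← ENNReal.ofReal_sum_of_nonneg
      (fun j hj => by linarith [hxf1 (↑j : ℝ) j.2])] at h2
    have h4 : ((0 : ℝ) - (-L)) = L := by ring
    rw [h4] at h2
    exact (ENNReal.ofReal_le_ofReal_iff
      (Finset.sum_nonneg fun j hj => by linarith [hxf1 (↑j : ℝ) j.2])).mp h2
  -- telescoping estimate
  have htel := sum_increments f hfmono w.card w le_rfl
    (fun j => (j : ℝ) - xf ↑j) (fun j => (j : ℝ) + xf ↑j) (-L - 2 * η) (2 * η)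
    (by linarith)
    (fun j hj => by
      have hj2 := j.2
      rw [Set.mem_Icc] at hj2
      have hx1 := hxf1 (↑j : ℝ) j.2
      have hx2 := hxf2 (↑j : ℝ) j.2
      exact ⟨show -L - 2 * η ≤ (j : ℝ) - xf ↑j by linarith,
        show (j : ℝ) - xf ↑j ≤ (j : ℝ) + xf ↑j by linarith,
        show (j : ℝ) + xf ↑j ≤ 2 * η by linarith⟩)
    hwdisj
  -- doubling estimate : f(2η) - f(-L-2η) ≤ r * (3L)
  have hexpL : Real.exp L = 2 := Real.exp_log two_pos
  have h4η : Real.exp (4 * η) < 25 / 24 := by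
    have h1 : 1 - 4 * η < Real.exp (-(4 * η)) := by
      have := Real.add_one_lt_exp (show -(4 * η) ≠ 0 by intro hc; nlinarith)
      linarith
    have h2 : Real.exp (4 * η) * Real.exp (-(4 * η)) = 1 := by
      rw [← Real.exp_add]; simp
    nlinarith [Real.exp_pos (4 * η), Real.exp_pos (-(4 * η))]
  have hπ4 : Real.pi * Real.exp (4 * η) < 4 := by
    nlinarith [Real.pi_lt_d2, Real.pi_gt_three, Real.exp_pos (4 * η)]
  have hE1 : Real.exp (-L - 2 * η) = 2⁻¹ * Real.exp (-(2 * η)) := by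
    have hh : -L - 2 * η = -L + -(2 * η) := by ring
    rw [hh, Real.exp_add, Real.exp_neg, hexpL]
  have hE2 : Real.exp (2 * η) * Real.exp (-(2 * η)) = 1 := by
    rw [← Real.exp_add]; simp
  have hE3 : Real.exp (2 * η) * Real.exp (2 * η) = Real.exp (4 * η) := by
    rw [← Real.exp_add]; congr 1; ring
  have hratio : Real.pi * (t * Real.exp (2 * η)) < 8 * (t * Real.exp (-L - 2 * η)) := by
    rw [hE1]
    nlinarith [Real.exp_pos (2 * η), Real.exp_pos (-(2 * η)),
      mul_pos ht0 (Real.exp_pos (2 * η)), mul_pos ht0 (Real.exp_pos (-(2 * η)))]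
  have hdoub := bohr_doubling Γ ν hν0 (t * Real.exp (-L - 2 * η)) (t * Real.exp (2 * η))
    (by positivity) hratio
  have hAB : f (2 * η) - f (-L - 2 * η) ≤ (r : ℝ) * (3 * L) := by
    have hFA : (0 : ℝ) < (F (t * Real.exp (-L - 2 * η)) : ℝ) := by
      exact_mod_cast hFpos _ (by positivity)
    have hFB : (0 : ℝ) < (F (t * Real.exp (2 * η)) : ℝ) := by
      exact_mod_cast hFpos _ (by positivity)
    have h1 : (F (t * Real.exp (2 * η)) : ℝ)
        ≤ (8 : ℝ) ^ r * (F (t * Real.exp (-L - 2 * η)) : ℝ) := by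
      exact_mod_cast hdoub
    have h2 : Real.log (F (t * Real.exp (2 * η)))
        ≤ Real.log ((8 : ℝ) ^ r * (F (t * Real.exp (-L - 2 * η)) : ℝ)) :=
      Real.log_le_log hFB h1
    rw [Real.log_mul (by positivity) hFA.ne', Real.log_pow] at h2
    have hlog8 : Real.log 8 ≤ 3 * L := by
      have h8 : (8 : ℝ) = 2 ^ 3 := by norm_num
      rw [h8, Real.log_pow, hLdef]
      push_cast
      linarith
    have h3 : (r : ℝ) * Real.log 8 ≤ (r : ℝ) * (3 * L) :=
      mul_le_mul_of_nonneg_left hlog8 (by positivity)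
    have hfB' : f (2 * η) = Real.log (F (t * Real.exp (2 * η))) := by simp only [hfdef]
    have hfA' : f (-L - 2 * η) = Real.log (F (t * Real.exp (-L - 2 * η))) := by simp only [hfdef]
    rw [hfB', hfA']
    linarith
  -- final contradiction
  have hwne : w.Nonempty := by
    rcases Finset.eq_empty_or_nonempty w with rfl | h
    · simp at hlen; linarith
    · exact h
  have hterm : ∀ j ∈ w, 50 * (r : ℝ) * xf ↑j
      < f ((j : ℝ) + xf ↑j) - f ((j : ℝ) - xf ↑j) :=
    fun j _ => hxf3 (↑j : ℝ) j.2
  have hsum1 : ∑ j ∈ w, (50 * (r : ℝ) * xf ↑j)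
      < ∑ j ∈ w, (f ((j : ℝ) + xf ↑j) - f ((j : ℝ) - xf ↑j)) :=
    Finset.sum_lt_sum_of_nonempty hwne hterm
  have hsum2 : ∑ j ∈ w, (50 * (r : ℝ) * xf ↑j) = 50 * (r : ℝ) * ∑ j ∈ w, xf ↑j :=
    (Finset.mul_sum _ _ _).symm
  have hsum3 : ∑ j ∈ w, (6 : ℝ) * xf ↑j = 6 * ∑ j ∈ w, xf ↑j :=
    (Finset.mul_sum _ _ _).symm
  have hSig : L / 6 ≤ ∑ j ∈ w, xf ↑j := by rw [hsum3] at hlen; linarith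
  have hfinal1 : 50 * (r : ℝ) * (L / 6) ≤ 50 * (r : ℝ) * ∑ j ∈ w, xf ↑j :=
    mul_le_mul_of_nonneg_left hSig (by positivity)
  nlinarith [htel, hAB, hL0, hr1']
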